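/- arXiv:2509.03234 — 2 statements merged into one kernel-verified Lean document; each statement's English description precedes it below -/
import Mathlib

section
/- Let N ≥ 2 and 1 ≤ k < N, let I₁,…,I_N and R₁,…,R_N be positive integers, let 𝒢 ∈ ℝ^{R₁×⋯×R_N} be a core tensor, let A^(j) ∈ ℝ^{R_j×I_j} be factor matrices, and let d^(j) ∈ ℝ^{R_j} be vectors, for j = 1,…,N. Define the TeRA weight-update tensor Δ𝒲 ∈ ℝ^{I₁×⋯×I_N} by Δ𝒲(i₁,…,i_N) = ∑_{r₁=1}^{R₁}⋯∑_{r_N=1}^{R_N} 𝒢(r₁,…,r_N) · ∏_{j=1}^N d^(j)(r_j) · ∏_{j=1}^N A^(j)(r_j, i_j). Then the matrix rank of the [N;k]-unfolding Δ𝐖_{[N;k]} satisfies rank(Δ𝐖_{[N;k]}) ≤ min(∏_{i=1}^k R_i, ∏_{i=k+1}^N R_i). -/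
/-- An order-`N` real tensor with dimensions `I 0, …, I (N-1)`. -/
abbrev Tensor {N : ℕ} (I : Fin N → ℕ) : Type :=
  ((i : Fin N) → Fin (I i)) → ℝ

/-- Row index type of the `[N;k]`-unfolding: the product of the first `k` index sets. -/
abbrev Row (N k : ℕ) (I : Fin N → ℕ) : Type :=
  (i : {j : Fin N // j.1 < k}) → Fin (I i.1)

/-- Column index type of the `[N;k]`-unfolding: the product of the last `N - k` index sets. -/
abbrev Col (N k : ℕ) (I : Fin N → ℕ) : Type :=
  (i : {j : Fin N // ¬ j.1 < k}) → Fin (I i.1)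

/-- The `[N;k]`-unfolding of an order-`N` tensor. -/
def unfold {N : ℕ} (k : ℕ) {I : Fin N → ℕ} (A : Tensor I) :
    Matrix (Row N k I) (Col N k I) ℝ :=
  fun r c => A fun i => if h : i.1 < k then r ⟨i, h⟩ else c ⟨i, h⟩

/-- **Theorem 1 (rank bound for TeRA).** For the TeRA weight-update tensor
`Δ𝒲(i₁,…,i_N) = ∑_{r₁,…,r_N} 𝒢(r₁,…,r_N) ∏_j d⁽ʲ⁾(r_j) ∏_j A⁽ʲ⁾(r_j, i_j)`,
the rank of its `[N;k]`-unfolding is at most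
`min (∏_{i=1}^k R_i) (∏_{i=k+1}^N R_i)`. -/
theorem tera_rank_bound (N k : ℕ) (hN : 2 ≤ N) (hk : 1 ≤ k) (hkN : k < N)
    (I R : Fin N → ℕ) (hI : ∀ i, 0 < I i) (hR : ∀ i, 0 < R i)
    (G : Tensor R)
    (A : (j : Fin N) → Fin (R j) → Fin (I j) → ℝ)
    (d : (j : Fin N) → Fin (R j) → ℝ)
    (ΔW : Tensor I)
    (hΔW : ∀ idx : (i : Fin N) → Fin (I i),
      ΔW idx = ∑ r : (j : Fin N) → Fin (R j),
        G r * (∏ j, d j (r j)) * ∏ j, A j (r j) (idx j)) :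
    (unfold k ΔW).rank ≤
      min (∏ i : {j : Fin N // j.1 < k}, R i.1)
          (∏ i : {j : Fin N // ¬ j.1 < k}, R i.1) := by
  classical
  let e := Equiv.piEquivPiSubtypeProd (fun j : Fin N => j.1 < k) (fun j => Fin (R j))
  let comb : Row N k R → Col N k R → ((j : Fin N) → Fin (R j)) :=
    fun a b => e.symm (a, b)
  have hcomb : ∀ a b (j : Fin N), comb a b j = if h : j.1 < k then a ⟨j, h⟩ else b ⟨j, h⟩ := by
    intro a b j
    simp [comb, e, Equiv.piEquivPiSubtypeProd_symm_apply]
  have hsum : ∀ (f : ((j : Fin N) → Fin (R j)) → ℝ),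
      ∑ r, f r = ∑ a : Row N k R, ∑ b : Col N k R, f (comb a b) := by
    intro f
    rw [Fintype.sum_equiv e f (fun ab => f (comb ab.1 ab.2)) (fun r => by simp [comb]),
      Fintype.sum_prod_type]
  have hentry : ∀ (r : Row N k I) (c : Col N k I) (a : Row N k R) (b : Col N k R),
      (∏ j, A j (comb a b j)
          ((fun i => if h : i.1 < k then r ⟨i, h⟩ else c ⟨i, h⟩ : (i : Fin N) → Fin (I i)) j))
        = (∏ j : {j : Fin N // j.1 < k}, A j.1 (a j) (r j)) *
          ∏ j : {j : Fin N // ¬ j.1 < k}, A j.1 (b j) (c j) := by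
    intro r c a b
    rw [← Fintype.prod_subtype_mul_prod_subtype (fun j : Fin N => j.1 < k)]
    congr 1
    · exact Fintype.prod_congr _ _ fun j => by rw [hcomb]; simp [j.2]
    · exact Fintype.prod_congr _ _ fun j => by rw [hcomb]; simp [j.2]
  let B : Matrix (Row N k I) (Row N k R) ℝ :=
    fun r a => ∏ j : {j : Fin N // j.1 < k}, A j.1 (a j) (r j)
  let C : Matrix (Row N k R) (Col N k I) ℝ :=
    fun a c => ∑ b : Col N k R, G (comb a b) * (∏ j, d j (comb a b j)) *
      ∏ j : {j : Fin N // ¬ j.1 < k}, A j.1 (b j) (c j)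
  have hBC : unfold k ΔW = B * C := by
    funext r c
    simp only [unfold, Matrix.mul_apply, hΔW, B, C]
    rw [hsum]
    refine Finset.sum_congr rfl fun a _ => ?_
    rw [Finset.mul_sum]
    refine Finset.sum_congr rfl fun b _ => ?_
    rw [hentry]
    ring
  let D : Matrix (Row N k I) (Col N k R) ℝ :=
    fun r b => ∑ a : Row N k R, G (comb a b) * (∏ j, d j (comb a b j)) *
      ∏ j : {j : Fin N // j.1 < k}, A j.1 (a j) (r j)
  let E : Matrix (Col N k R) (Col N k I) ℝ :=
    fun b c => ∏ j : {j : Fin N // ¬ j.1 < k}, A j.1 (b j) (c j)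
  have hDE : unfold k ΔW = D * E := by
    funext r c
    simp only [unfold, Matrix.mul_apply, hΔW, D, E]
    rw [hsum, Finset.sum_comm]
    refine Finset.sum_congr rfl fun b _ => ?_
    rw [Finset.sum_mul]
    refine Finset.sum_congr rfl fun a _ => ?_
    rw [hentry]
    ring
  have h1 : (unfold k ΔW).rank ≤ ∏ i : {j : Fin N // j.1 < k}, R i.1 := by
    rw [hBC]
    calc (B * C).rank ≤ B.rank := Matrix.rank_mul_le_left B C
    _ ≤ Fintype.card (Row N k R) := B.rank_le_card_width
    _ = ∏ i : {j : Fin N // j.1 < k}, R i.1 := by simp [Fintype.card_pi]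
  have h2 : (unfold k ΔW).rank ≤ ∏ i : {j : Fin N // ¬ j.1 < k}, R i.1 := by
    rw [hDE]
    calc (D * E).rank ≤ E.rank := Matrix.rank_mul_le_right D E
    _ ≤ Fintype.card (Col N k R) := E.rank_le_card_height
    _ = ∏ i : {j : Fin N // ¬ j.1 < k}, R i.1 := by simp [Fintype.card_pi]
  exact le_min h1 h2
end

section
/- Let N ≥ 2 and 1 ≤ k < N, let I₁,…,I_N and R₁,…,R_N be positive integers, let 𝒢 ∈ ℝ^{R₁×⋯×R_N}, A^(j) ∈ ℝ^{R_j×I_j}, and d^(j) ∈ ℝ^{R_j} for j = 1,…,N, and define the TeRA update Δ𝒲 ∈ ℝ^{I₁×⋯×I_N} by Δ𝒲(i₁,…,i_N) = ∑_{r₁,…,r_N} 𝒢(r₁,…,r_N) ∏_{j=1}^N d^(j)(r_j) ∏_{j=1}^N A^(j)(r_j, i_j). Let L be the matrix with entry ∏_{j=1}^k A^(j)(r_j, i_j) at row (r₁,…,r_k) and column (i₁,…,i_k), let M be the matrix with entry ∏_{j=k+1}^N A^(j)(r_j, i_j) at row (r_{k+1},…,r_N) and column (i_{k+1},…,i_N),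 let D₁ be the diagonal matrix indexed by (r₁,…,r_k) with diagonal entries ∏_{j=1}^k d^(j)(r_j), and let D₂ be the diagonal matrix indexed by (r_{k+1},…,r_N) with diagonal entries ∏_{j=k+1}^N d^(j)(r_j). Then Δ𝐖_{[N;k]} = Lᵀ · D₁ · 𝐆_{[N;k]} · D₂ · M. -/
open Matrix

/-- **Unfolding of the TeRA update.** For the TeRA update
`Δ𝒲(i₁,…,i_N) = ∑_{r₁,…,r_N} 𝒢(r₁,…,r_N) ∏_j d⁽ʲ⁾(r_j) ∏_j A⁽ʲ⁾(r_j, i_j)`,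
the `[N;k]`-unfolding factorizes as `Δ𝐖_{[N;k]} = Lᵀ · D₁ · 𝐆_{[N;k]} · D₂ · M`,
where `L`, `M` are the Kronecker-product factor matrices and `D₁`, `D₂` are the
diagonal matrices built from the scaling vectors `d⁽ʲ⁾`. -/
theorem tera_unfolding_factorization (N k : ℕ) (hN : 2 ≤ N) (hk : 1 ≤ k) (hkN : k < N)
    (I R : Fin N → ℕ) (hI : ∀ i, 0 < I i) (hR : ∀ i, 0 < R i)
    (G : Tensor R)
    (A : (j : Fin N) → Fin (R j) → Fin (I j) → ℝ)
    (d : (j : Fin N) → Fin (R j) → ℝ)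
    (ΔW : Tensor I)
    (hΔW : ∀ idx : (i : Fin N) → Fin (I i),
      ΔW idx = ∑ r : (j : Fin N) → Fin (R j),
        G r * (∏ j, d j (r j)) * ∏ j, A j (r j) (idx j))
    (L : Matrix (Row N k R) (Row N k I) ℝ)
    (hL : ∀ (r : Row N k R) (i : Row N k I),
      L r i = ∏ j : {l : Fin N // l.1 < k}, A j.1 (r j) (i j))
    (M : Matrix (Col N k R) (Col N k I) ℝ)
    (hM : ∀ (r : Col N k R) (c : Col N k I),
      M r c = ∏ j : {l : Fin N // ¬ l.1 < k}, A j.1 (r j) (c j))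
    (D₁ : Matrix (Row N k R) (Row N k R) ℝ)
    (hD₁ : D₁ = Matrix.diagonal fun r : Row N k R =>
      ∏ j : {l : Fin N // l.1 < k}, d j.1 (r j))
    (D₂ : Matrix (Col N k R) (Col N k R) ℝ)
    (hD₂ : D₂ = Matrix.diagonal fun r : Col N k R =>
      ∏ j : {l : Fin N // ¬ l.1 < k}, d j.1 (r j)) :
    unfold k ΔW = Lᵀ * D₁ * unfold k G * D₂ * M := by
  subst hD₁ hD₂
  funext r c
  -- compute the RHS entry
  have hR : (Lᵀ * Matrix.diagonal (fun r : Row N k R =>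
        ∏ j : {l : Fin N // l.1 < k}, d j.1 (r j)) * unfold k G *
        Matrix.diagonal (fun r : Col N k R =>
        ∏ j : {l : Fin N // ¬ l.1 < k}, d j.1 (r j)) * M) r c
      = ∑ s : Row N k R, ∑ t : Col N k R,
          (∏ j : {l : Fin N // l.1 < k}, A j.1 (s j) (r j)) *
          (∏ j : {l : Fin N // l.1 < k}, d j.1 (s j)) *
          unfold k G s t *
          (∏ j : {l : Fin N // ¬ l.1 < k}, d j.1 (t j)) *
          (∏ j : {l : Fin N // ¬ l.1 < k}, A j.1 (t j) (c j)) := by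
    simp only [Matrix.mul_apply, Matrix.diagonal_apply, Matrix.transpose_apply,
      hL, hM, Finset.sum_mul, Finset.mul_sum, mul_ite, ite_mul, mul_zero, zero_mul,
      Finset.sum_ite_eq, Finset.sum_ite_eq', Finset.mem_univ, if_true]
    rw [Finset.sum_comm]
  rw [hR]
  rw [show unfold k ΔW r c = ΔW (fun i => if h : i.1 < k then r ⟨i, h⟩ else c ⟨i, h⟩)
      from rfl, hΔW]
  rw [← (Equiv.piEquivPiSubtypeProd (fun j : Fin N => j.1 < k)
      (fun j => Fin (R j))).symm.sum_comp, Fintype.sum_prod_type]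
  refine Finset.sum_congr rfl fun s _ => Finset.sum_congr rfl fun t _ => ?_
  simp only [Equiv.piEquivPiSubtypeProd_symm_apply]
  rw [← Fintype.prod_subtype_mul_prod_subtype (fun j : Fin N => j.1 < k)
      (fun j => d j (if h : j.1 < k then s ⟨j, h⟩ else t ⟨j, h⟩)),
    ← Fintype.prod_subtype_mul_prod_subtype (fun j : Fin N => j.1 < k)
      (fun j => A j (if h : j.1 < k then s ⟨j, h⟩ else t ⟨j, h⟩)
        (if h : j.1 < k then r ⟨j, h⟩ else c ⟨j, h⟩))]
  have h1 : ∀ j : {l : Fin N // l.1 < k},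
      (if h : j.1.1 < k then s ⟨j.1, h⟩ else t ⟨j.1, h⟩) = s j := by
    intro j; rw [dif_pos j.2]
  have h2 : ∀ j : {l : Fin N // ¬ l.1 < k},
      (if h : j.1.1 < k then s ⟨j.1, h⟩ else t ⟨j.1, h⟩) = t j := by
    intro j; rw [dif_neg j.2]
  have h3 : ∀ j : {l : Fin N // l.1 < k},
      (if h : j.1.1 < k then r ⟨j.1, h⟩ else c ⟨j.1, h⟩) = r j := by
    intro j; rw [dif_pos j.2]
  have h4 : ∀ j : {l : Fin N // ¬ l.1 < k},
      (if h : j.1.1 < k then r ⟨j.1, h⟩ else c ⟨j.1, h⟩) = c j := by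
    intro j; rw [dif_neg j.2]
  simp only [h1, h2, h3, h4]
  have hG : ((Equiv.piEquivPiSubtypeProd (fun j : Fin N => j.1 < k)
      (fun j => Fin (R j))).symm (s, t))
      = fun i => if h : i.1 < k then s ⟨i, h⟩ else t ⟨i, h⟩ := by
    ext i
    simp [Equiv.piEquivPiSubtypeProd]
  rw [hG]
  rw [show G (fun i => if h : i.1 < k then s ⟨i, h⟩ else t ⟨i, h⟩) = unfold k G s t
      from rfl]
  ring
end
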